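/- arXiv:2107.00633 — 2 statements merged into one kernel-verified Lean document; each statement's English description precedes it below -/
import Mathlib

section
/- With the Khmaladze transformation T defined by (T f)(x) = f(x) - ∫_{-∞}^{x} g(y)ᵀ A(y)⁻¹ (∫_{y}^{∞} g(z) df(z)) dK(y), where A(y) = ∫_{y}^{∞} g(u)g(u)ᵀ dK(u), the function Γ(x) := ∫_{-∞}^{x} g(t) dK(t) ∈ ℝ^d (componentwise) is annihilated: T(Γ_j)(x) = 0 for every x ≤ x₀ and every coordinate j = 1, …, d. -/
open MeasureTheory Matrix

/-- The Khmaladze transform annihilates `Γ_j(x) = ∫_{-∞}^x g_j dK`: for `x ≤ x₀`,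
`Γ_j(x) - ∫_{-∞}^x g(y)ᵀ A(y)⁻¹ (∫_y^∞ g g_j dK) dK(y) = 0`, where
`A(y) = ∫_y^∞ g gᵀ dK` is invertible for `y ≤ x₀`. -/
theorem khmaladze_annihilates_Gamma {d : ℕ} (κ : Measure ℝ) [IsFiniteMeasure κ]
    (g : ℝ → Fin d → ℝ) (x₀ : ℝ)
    (hg : ∀ j, Integrable (fun t => g t j) κ)
    (hgg : ∀ i j, Integrable (fun t => g t i * g t j) κ)
    (A : ℝ → Matrix (Fin d) (Fin d) ℝ)
    (hA : ∀ y i j, A y i j = ∫ z in Set.Ioi y, g z i * g z j ∂κ)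
    (hAinv : ∀ y ≤ x₀, IsUnit (A y)) :
    ∀ x ≤ x₀, ∀ j : Fin d,
      (∫ t in Set.Iic x, g t j ∂κ) -
        (∫ y in Set.Iic x,
          g y ⬝ᵥ ((A y)⁻¹ *ᵥ fun i => ∫ z in Set.Ioi y, g z i * g z j ∂κ) ∂κ) = 0 := by
  intro x hx j
  have key : ∀ y ∈ Set.Iic x,
      g y ⬝ᵥ ((A y)⁻¹ *ᵥ fun i => ∫ z in Set.Ioi y, g z i * g z j ∂κ) = g y j := by
    intro y hy
    have hy0 : y ≤ x₀ := le_trans hy hx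
    have hv : (fun i => ∫ z in Set.Ioi y, g z i * g z j ∂κ) = A y *ᵥ Pi.single j 1 := by
      funext i
      simp [Matrix.mulVec_single, hA y i j]
    rw [hv, Matrix.mulVec_mulVec, Matrix.nonsing_inv_mul _
      ((Matrix.isUnit_iff_isUnit_det _).mp (hAinv y hy0)), Matrix.one_mulVec,
      dotProduct_single, mul_one]
  rw [setIntegral_congr_fun measurableSet_Iic key, sub_self]
end

section
/- Let (χ_i) be a strictly stationary ergodic real-valued sequence with E|χ₁| < ∞ and (X_i) a strictly stationary ergodic real sequence (jointly stationary ergodic with χ). Suppose the function x ↦ E[|χ₁| 1{X₀ ≤ x}] is continuous. Then sup_{x ∈ ℝ} | n^{-1} Σ_{i=1}^n χ_i 1{X_{i-1} ≤ x} - E[χ₁ 1{X₀ ≤ x}] | → 0 almost surely. -/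
open MeasureTheory Filter

section Birkhoff

variable {Ω : Type*} {mΩ : MeasurableSpace Ω} {μ : Measure Ω} {T : Ω → Ω} {f : Ω → ℝ}

/-- Covering inequality for the Katznelson–Weiss argument. -/
private lemma cover_ineq {g : Ω → ℝ} {τ : Ω → ℕ} {N : ℕ}
    (hτ1 : ∀ ω, 1 ≤ τ ω) (hτN : ∀ ω, τ ω ≤ N)
    (hS : ∀ ω, 0 ≤ ∑ i ∈ Finset.range (τ ω), g (T^[i] ω)) :
    ∀ (L : ℕ) (ω : Ω), -∑ i ∈ Finset.Ico (L - N) L, |g (T^[i] ω)|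
      ≤ ∑ i ∈ Finset.range L, g (T^[i] ω) := by
  intro L
  induction L using Nat.strong_induction_on with
  | _ L IH =>
    intro ω
    rcases Nat.eq_zero_or_pos L with h0 | hLpos
    · subst h0; simp
    by_cases hkL : τ ω ≤ L
    · have hk1 := hτ1 ω
      have hL' : L = τ ω + (L - τ ω) := by omega
      have split : ∑ i ∈ Finset.range L, g (T^[i] ω)
          = (∑ i ∈ Finset.range (τ ω), g (T^[i] ω))
            + ∑ i ∈ Finset.range (L - τ ω), g (T^[i] (T^[τ ω] ω)) := by
        conv_lhs => rw [hL']
        rw [Finset.sum_range_add]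
        congr 1
        apply Finset.sum_congr rfl
        intro i _
        rw [Nat.add_comm, Function.iterate_add_apply]
      have h2 := IH (L - τ ω) (by omega) (T^[τ ω] ω)
      have hre : ∑ i ∈ Finset.Ico (L - τ ω - N) (L - τ ω), |g (T^[i] (T^[τ ω] ω))|
          = ∑ i ∈ Finset.Ico (L - τ ω - N + τ ω) L, |g (T^[i] ω)| := by
        rw [Finset.sum_Ico_eq_sum_range, Finset.sum_Ico_eq_sum_range]
        have hcard : L - τ ω - (L - τ ω - N) = L - (L - τ ω - N + τ ω) := by omega
        rw [hcard]
        apply Finset.sum_congr rfl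
        intro i _
        rw [← Function.iterate_add_apply]
        have h9 : L - τ ω - N + i + τ ω = L - τ ω - N + τ ω + i := by omega
        rw [h9]
      have hsub : ∑ i ∈ Finset.Ico (L - τ ω - N + τ ω) L, |g (T^[i] ω)|
          ≤ ∑ i ∈ Finset.Ico (L - N) L, |g (T^[i] ω)| := by
        apply Finset.sum_le_sum_of_subset_of_nonneg
        · apply Finset.Ico_subset_Ico _ le_rfl
          omega
        · intro i _ _; exact abs_nonneg _
      have := hS ω
      rw [split]
      rw [hre] at h2
      linarith
    · push_neg at hkL
      have hLN : L - N = 0 := by have := hτN ω; omega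
      rw [hLN, ← Finset.range_eq_Ico]
      have : -∑ i ∈ Finset.range L, |g (T^[i] ω)| ≤ ∑ i ∈ Finset.range L, g (T^[i] ω) := by
        rw [← Finset.sum_neg_distrib]
        exact Finset.sum_le_sum fun i _ => neg_abs_le _
      exact this

end Birkhoff

section Helpers
variable {Ω : Type*} {mΩ : MeasurableSpace Ω} {μ : Measure Ω} {T : Ω → Ω}

private lemma integral_comp_mp (hT : MeasurePreserving T μ μ) {g : Ω → ℝ}
    (hgm : Measurable g) : ∫ ω, g (T ω) ∂μ = ∫ ω, g ω ∂μ := by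
  have h1 : AEStronglyMeasurable g (Measure.map T μ) := by
    rw [hT.map_eq]; exact hgm.aestronglyMeasurable
  rw [← MeasureTheory.integral_map hT.measurable.aemeasurable h1, hT.map_eq]

private lemma integrable_comp_mp (hT : MeasurePreserving T μ μ) {g : Ω → ℝ}
    (hgm : Measurable g) (hgi : Integrable g μ) : Integrable (fun ω => g (T ω)) μ := by
  have : Integrable g (Measure.map T μ) := by rwa [hT.map_eq]
  exact (integrable_map_measure hgm.aestronglyMeasurable hT.measurable.aemeasurable).mp this

end Helpers

section KW
variable {Ω : Type*} {mΩ : MeasurableSpace Ω} {μ : Measure Ω} {T : Ω → Ω} {f : Ω → ℝ}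

private lemma kw_key [IsProbabilityMeasure μ] (hT : MeasurePreserving T μ μ)
    (hfm : Measurable f) (hfi : Integrable f μ) (b : ℝ)
    (hV : μ {ω | ∃ n : ℕ, 1 ≤ n ∧ (n : ℝ) * b < ∑ i ∈ Finset.range n, f (T^[i] ω)} = 1) :
    b ≤ ∫ ω, f ω ∂μ := by
  have hTm : Measurable T := hT.measurable
  have hiter : ∀ i : ℕ, Measurable (T^[i]) := fun i => hTm.iterate i
  have hSm : ∀ n : ℕ, Measurable (fun ω => ∑ i ∈ Finset.range n, f (T^[i] ω)) :=
    fun n => Finset.measurable_sum _ fun i _ => hfm.comp (hiter i)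
  set V : Set Ω := {ω | ∃ n : ℕ, 1 ≤ n ∧ (n : ℝ) * b < ∑ i ∈ Finset.range n, f (T^[i] ω)} with hVdef
  have hVmeas : MeasurableSet V := by
    have : V = ⋃ n : ℕ, ⋃ _ : 1 ≤ n,
        {ω | (n : ℝ) * b < ∑ i ∈ Finset.range n, f (T^[i] ω)} := by
      ext ω; simp [hVdef]
    rw [this]
    exact MeasurableSet.iUnion fun n => MeasurableSet.iUnion fun _ =>
      measurableSet_lt measurable_const (hSm n)
  set B : ℕ → Set Ω := fun N =>
    {ω | ∀ n, 1 ≤ n → n ≤ N → ∑ i ∈ Finset.range n, f (T^[i] ω) ≤ (n : ℝ) * b} with hBdef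
  have hBmeas : ∀ N, MeasurableSet (B N) := by
    intro N
    have : B N = ⋂ n : ℕ, ⋂ _ : 1 ≤ n, ⋂ _ : n ≤ N,
        {ω | ∑ i ∈ Finset.range n, f (T^[i] ω) ≤ (n : ℝ) * b} := by
      ext ω; simp [hBdef]
    rw [this]
    exact MeasurableSet.iInter fun n => MeasurableSet.iInter fun _ =>
      MeasurableSet.iInter fun _ => measurableSet_le (hSm n) measurable_const
  set h : Ω → ℝ := fun ω => max (f ω) b - f ω with hhdef
  have hh0 : ∀ ω, 0 ≤ h ω := fun ω => by simp [hhdef]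
  have hhb : ∀ ω, h ω ≤ |f ω| + |b| := by
    intro ω
    rcases le_total (f ω) b with hc | hc
    · simp only [hhdef, max_eq_right hc]
      have := abs_nonneg (f ω); have := le_abs_self b; have := neg_abs_le (f ω); linarith
    · simp only [hhdef, max_eq_left hc]
      have := abs_nonneg (f ω); have := abs_nonneg b; linarith
  have hhm : Measurable h := (hfm.max measurable_const).sub hfm
  have hfb_int : Integrable (fun ω => |f ω| + |b|) μ := hfi.abs.add (integrable_const _)
  have hhi : Integrable h μ := by
    apply hfb_int.mono hhm.aestronglyMeasurable
    filter_upwards with ω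
    rw [Real.norm_eq_abs, Real.norm_eq_abs, abs_of_nonneg (hh0 ω),
      abs_of_nonneg (by positivity)]
    exact hhb ω
  have hindi : ∀ N, Integrable ((B N).indicator h) μ := by
    intro N
    apply hhi.mono (hhm.indicator (hBmeas N)).aestronglyMeasurable
    filter_upwards with ω
    rw [Real.norm_eq_abs, Real.norm_eq_abs, abs_of_nonneg (hh0 ω)]
    rw [abs_of_nonneg (Set.indicator_nonneg (fun ω _ => hh0 ω) ω)]
    exact Set.indicator_le_self' (fun ω _ => hh0 ω) ω
  have main : ∀ N : ℕ, 1 ≤ N → b ≤ (∫ ω, f ω ∂μ) + ∫ ω, (B N).indicator h ω ∂μ := by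
    intro N hN1
    classical
    set g : Ω → ℝ := fun ω => (if ω ∈ B N then max (f ω) b else f ω) - b with hgdef
    have hgeq : ∀ ω, g ω = f ω - b + (B N).indicator h ω := by
      intro ω
      by_cases hω : ω ∈ B N
      · simp only [hgdef, if_pos hω, Set.indicator_of_mem hω, hhdef]; ring
      · simp only [hgdef, if_neg hω, Set.indicator_of_notMem hω, add_zero]
    have hgm : Measurable g :=
      (Measurable.ite (hBmeas N) (hfm.max measurable_const) hfm).sub measurable_const
    have hgi : Integrable g μ := by
      have h1 : Integrable (fun ω => f ω - b + (B N).indicator h ω) μ :=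
        (hfi.sub (integrable_const b)).add (hindi N)
      exact h1.congr (ae_of_all _ fun ω => (hgeq ω).symm)
    set τ : Ω → ℕ := fun ω => if hx : ∃ n : ℕ, 1 ≤ n ∧ n ≤ N ∧
        (n : ℝ) * b < ∑ i ∈ Finset.range n, f (T^[i] ω) then Nat.find hx else 1 with hτdef
    have hτ1 : ∀ ω, 1 ≤ τ ω := by
      intro ω; rw [hτdef]; dsimp only
      split_ifs with hx
      · exact (Nat.find_spec hx).1
      · exact le_rfl
    have hτN : ∀ ω, τ ω ≤ N := by
      intro ω; rw [hτdef]; dsimp only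
      split_ifs with hx
      · exact (Nat.find_spec hx).2.1
      · exact hN1
    have hf'ge : ∀ ω', f ω' ≤ (if ω' ∈ B N then max (f ω') b else f ω') := by
      intro ω'; split_ifs
      · exact le_max_left _ _
      · exact le_rfl
    have hS : ∀ ω, 0 ≤ ∑ i ∈ Finset.range (τ ω), g (T^[i] ω) := by
      intro ω
      have hsum : ∑ i ∈ Finset.range (τ ω), g (T^[i] ω)
          = (∑ i ∈ Finset.range (τ ω),
              (if T^[i] ω ∈ B N then max (f (T^[i] ω)) b else f (T^[i] ω)))
            - (τ ω : ℝ) * b := by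
        simp only [hgdef]
        rw [Finset.sum_sub_distrib, Finset.sum_const, Finset.card_range, nsmul_eq_mul]
      rw [hsum]
      by_cases hx : ∃ n : ℕ, 1 ≤ n ∧ n ≤ N ∧
          (n : ℝ) * b < ∑ i ∈ Finset.range n, f (T^[i] ω)
      · have hτ : τ ω = Nat.find hx := by rw [hτdef]; exact dif_pos hx
        have hspec := Nat.find_spec hx
        have hlt : (τ ω : ℝ) * b < ∑ i ∈ Finset.range (τ ω), f (T^[i] ω) := by
          rw [hτ]; exact hspec.2.2
        have hle : ∑ i ∈ Finset.range (τ ω), f (T^[i] ω)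
            ≤ ∑ i ∈ Finset.range (τ ω),
              (if T^[i] ω ∈ B N then max (f (T^[i] ω)) b else f (T^[i] ω)) :=
          Finset.sum_le_sum fun i _ => hf'ge _
        linarith
      · have hτ : τ ω = 1 := by rw [hτdef]; exact dif_neg hx
        have hωB : ω ∈ B N := by
          rw [hBdef]
          push_neg at hx
          intro n h1 h2
          exact hx n h1 h2
        rw [hτ]
        rw [Finset.sum_range_one, Function.iterate_zero_apply, if_pos hωB]
        have := le_max_right (f ω) b
        push_cast
        linarith
    have hcomp_i : ∀ i : ℕ, Integrable (fun ω => g (T^[i] ω)) μ := fun i =>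
      integrable_comp_mp (hT.iterate i) hgm hgi
    have habs_i : ∀ i : ℕ, Integrable (fun ω => |g (T^[i] ω)|) μ := fun i => (hcomp_i i).abs
    have hintC : 0 ≤ ∫ ω, |g ω| ∂μ := integral_nonneg fun ω => abs_nonneg _
    have hIg0 : 0 ≤ ∫ ω, g ω ∂μ := by
      by_contra hneg
      push_neg at hneg
      obtain ⟨L, hL⟩ := exists_nat_gt ((N : ℝ) * (∫ ω, |g ω| ∂μ) / (-(∫ ω, g ω ∂μ)))
      have hkey : -((N : ℝ) * ∫ ω, |g ω| ∂μ) ≤ (L : ℝ) * ∫ ω, g ω ∂μ := by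
        have hptw := cover_ineq hτ1 hτN hS L
        have hmono : ∫ ω, (-∑ i ∈ Finset.Ico (L - N) L, |g (T^[i] ω)|) ∂μ
            ≤ ∫ ω, (∑ i ∈ Finset.range L, g (T^[i] ω)) ∂μ := by
          apply integral_mono
          · exact ((integrable_finset_sum _ (fun i _ => habs_i i)).neg)
          · exact integrable_finset_sum _ (fun i _ => hcomp_i i)
          · exact hptw
        have hRHS : ∫ ω, (∑ i ∈ Finset.range L, g (T^[i] ω)) ∂μ
            = (L : ℝ) * ∫ ω, g ω ∂μ := by
          rw [integral_finset_sum _ (fun i _ => hcomp_i i)]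
          rw [Finset.sum_congr rfl (fun i _ => integral_comp_mp (hT.iterate i) hgm)]
          rw [Finset.sum_const, Finset.card_range, nsmul_eq_mul]
        have hLHS : ∫ ω, (-∑ i ∈ Finset.Ico (L - N) L, |g (T^[i] ω)|) ∂μ
            = -(((L - (L - N) : ℕ) : ℝ) * ∫ ω, |g ω| ∂μ) := by
          rw [integral_neg, integral_finset_sum _ (fun i _ => habs_i i)]
          have : ∀ i ∈ Finset.Ico (L - N) L,
              ∫ ω, |g (T^[i] ω)| ∂μ = ∫ ω, |g ω| ∂μ := fun i _ =>
            integral_comp_mp (hT.iterate i) hgm.abs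
          rw [Finset.sum_congr rfl this, Finset.sum_const, Nat.card_Ico, nsmul_eq_mul]
        rw [hRHS] at hmono
        rw [hLHS] at hmono
        have hcard : ((L - (L - N) : ℕ) : ℝ) ≤ (N : ℝ) := by
          have : (L - (L - N) : ℕ) ≤ N := by omega
          exact_mod_cast this
        nlinarith
      rw [div_lt_iff₀ (by linarith : (0:ℝ) < -(∫ ω, g ω ∂μ))] at hL
      nlinarith
    have hfinal : ∫ ω, g ω ∂μ
        = (∫ ω, f ω ∂μ) - b + ∫ ω, (B N).indicator h ω ∂μ := by
      rw [integral_congr_ae (ae_of_all _ hgeq)]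
      have hi1 : Integrable (fun a => f a - b) μ := hfi.sub (integrable_const b)
      rw [integral_add hi1 (hindi N), integral_sub hfi (integrable_const b), integral_const]
      simp
    rw [hfinal] at hIg0
    linarith
  -- limit of the indicator integrals is 0
  have hlim : Tendsto (fun N => ∫ ω, (B N).indicator h ω ∂μ) atTop (nhds 0) := by
    have hBanti : Antitone B := fun M N hMN ω hω n h1 h2 => hω n h1 (h2.trans hMN)
    have hInter : (⋂ N, B N) = Vᶜ := by
      ext ω
      simp only [Set.mem_iInter, hBdef, Set.mem_setOf_eq, Set.mem_compl_iff, hVdef, not_exists,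
        not_and, not_lt]
      constructor
      · intro hω n h1; exact hω n n h1 le_rfl
      · intro hω N n h1 _; exact hω n h1
    have hnull : μ (⋂ N, B N) = 0 := by
      rw [hInter]
      exact (prob_compl_eq_zero_iff hVmeas).mpr hV
    have hzero : ∫ ω, (⋂ N, B N).indicator h ω ∂μ = 0 := by
      apply integral_eq_zero_of_ae
      filter_upwards [compl_mem_ae_iff.mpr hnull] with ω hω
      exact Set.indicator_of_notMem hω h
    rw [← hzero]
    apply tendsto_integral_of_dominated_convergence (fun ω => |f ω| + |b|)
      (fun N => (hhm.indicator (hBmeas N)).aestronglyMeasurable) hfb_int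
    · intro N; filter_upwards with ω
      rw [Real.norm_eq_abs, abs_of_nonneg (Set.indicator_nonneg (fun ω _ => hh0 ω) ω)]
      exact le_trans (Set.indicator_le_self' (fun ω _ => hh0 ω) ω) (hhb ω)
    · filter_upwards with ω
      by_cases hω : ω ∈ ⋂ N, B N
      · have heq : ∀ N : ℕ, (⋂ N, B N).indicator h ω = (B N).indicator h ω := by
          intro N
          rw [Set.indicator_of_mem (Set.mem_iInter.mp hω N), Set.indicator_of_mem hω]
        exact tendsto_const_nhds.congr heq
      · obtain ⟨M, hM⟩ : ∃ M, ω ∉ B M := by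
          by_contra hc; push_neg at hc; exact hω (Set.mem_iInter.mpr hc)
        rw [Set.indicator_of_notMem hω]
        apply Tendsto.congr' _ tendsto_const_nhds
        filter_upwards [eventually_ge_atTop M] with N hN
        exact (Set.indicator_of_notMem (fun hc => hM (hBanti hN hc)) h).symm
  have : Tendsto (fun N => (∫ ω, f ω ∂μ) + ∫ ω, (B N).indicator h ω ∂μ) atTop
      (nhds ((∫ ω, f ω ∂μ) + 0)) := tendsto_const_nhds.add hlim
  rw [add_zero] at this
  exact ge_of_tendsto this (eventually_atTop.2 ⟨1, main⟩)

end KW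

section Inv
variable {Ω : Type*} {mΩ : MeasurableSpace Ω} {μ : Measure Ω} {T : Ω → Ω} {f : Ω → ℝ}

private def Dset (T : Ω → Ω) (f : Ω → ℝ) (q : ℝ) : Set Ω :=
  {ω | ∃ᶠ n : ℕ in atTop, (n : ℝ) * q < ∑ i ∈ Finset.range n, f (T^[i] ω)}

private lemma Dset_meas (hTm : Measurable T) (hfm : Measurable f) (q : ℝ) :
    MeasurableSet (Dset T f q) := by
  have hSm : ∀ n : ℕ, Measurable (fun ω => ∑ i ∈ Finset.range n, f (T^[i] ω)) :=
    fun n => Finset.measurable_sum _ fun i _ => hfm.comp (hTm.iterate i)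
  have : Dset T f q = ⋂ a : ℕ, ⋃ n : ℕ, ⋃ _ : a ≤ n,
      {ω | (n : ℝ) * q < ∑ i ∈ Finset.range n, f (T^[i] ω)} := by
    ext ω
    simp [Dset, frequently_atTop]
  rw [this]
  exact MeasurableSet.iInter fun a => MeasurableSet.iUnion fun n => MeasurableSet.iUnion fun _ =>
    measurableSet_lt measurable_const (hSm n)

private lemma Dset_mono {q q' : ℝ} (hqq' : q ≤ q') : Dset T f q' ⊆ Dset T f q := by
  intro ω hω
  apply hω.mono
  intro n hn
  refine lt_of_le_of_lt ?_ hn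
  exact mul_le_mul_of_nonneg_left hqq' (Nat.cast_nonneg n)

private lemma Dset_claim1 {q q' : ℝ} (hqq' : q < q') :
    Dset T f q' ⊆ T ⁻¹' (Dset T f q) := by
  intro ω hω
  simp only [Dset, Set.mem_setOf_eq, Set.mem_preimage] at hω ⊢
  rw [frequently_atTop] at hω ⊢
  intro a
  obtain ⟨N₀, hN₀⟩ := exists_nat_ge ((f ω - q) / (q' - q))
  obtain ⟨n, hn, hlt⟩ := hω (max (a + 1) (N₀ + 1))
  have hn1 : 1 ≤ n := le_trans (le_trans (Nat.le_add_left 1 a) (le_max_left _ _)) hn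
  have hnN : N₀ + 1 ≤ n := le_trans (le_max_right _ _) hn
  refine ⟨n - 1, by omega, ?_⟩
  have hrw : ∑ i ∈ Finset.range (n - 1), f (T^[i] (T ω))
      = (∑ i ∈ Finset.range n, f (T^[i] ω)) - f ω := by
    have hn' : n = (n - 1) + 1 := by omega
    conv_rhs => rw [hn', Finset.sum_range_succ']
    simp only [Function.iterate_succ_apply, Function.iterate_zero_apply]
    ring
  rw [hrw]
  have hcast : ((n - 1 : ℕ) : ℝ) = (n : ℝ) - 1 := by
    rw [Nat.cast_sub hn1]; norm_num
  rw [hcast]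
  have hdiv : f ω - q ≤ (N₀ : ℝ) * (q' - q) := by
    rw [div_le_iff₀ (by linarith)] at hN₀
    linarith
  have hcastn : (N₀ : ℝ) + 1 ≤ (n : ℝ) := by exact_mod_cast hnN
  nlinarith

private lemma Dset_claim2 {q q' : ℝ} (hqq' : q < q') :
    T ⁻¹' (Dset T f q') ⊆ Dset T f q := by
  intro ω hω
  simp only [Dset, Set.mem_setOf_eq, Set.mem_preimage] at hω ⊢
  rw [frequently_atTop] at hω ⊢
  intro a
  obtain ⟨N₀, hN₀⟩ := exists_nat_ge ((q - f ω) / (q' - q))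
  obtain ⟨m, hm, hlt⟩ := hω (max a N₀)
  have hmN : N₀ ≤ m := le_trans (le_max_right _ _) hm
  refine ⟨m + 1, by have := le_trans (le_max_left a N₀) hm; omega, ?_⟩
  have hrw : ∑ i ∈ Finset.range (m + 1), f (T^[i] ω)
      = (∑ i ∈ Finset.range m, f (T^[i] (T ω))) + f ω := by
    rw [Finset.sum_range_succ']
    simp only [Function.iterate_succ_apply, Function.iterate_zero_apply]
  rw [hrw]
  have hdiv : q - f ω ≤ (N₀ : ℝ) * (q' - q) := by
    rw [div_le_iff₀ (by linarith)] at hN₀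
    linarith
  have hcastn : (N₀ : ℝ) ≤ (m : ℝ) := by exact_mod_cast hmN
  push_cast
  nlinarith

private def Uset (T : Ω → Ω) (f : Ω → ℝ) (b : ℝ) : Set Ω :=
  ⋃ q : ℚ, ⋃ _ : b < (q : ℝ), Dset T f q

private lemma Uset_meas (hTm : Measurable T) (hfm : Measurable f) (b : ℝ) :
    MeasurableSet (Uset T f b) :=
  MeasurableSet.iUnion fun q => MeasurableSet.iUnion fun _ => Dset_meas hTm hfm q

private lemma Uset_inv (b : ℝ) : T ⁻¹' (Uset T f b) = Uset T f b := by
  ext ω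
  simp only [Set.mem_preimage, Uset, Set.mem_iUnion]
  constructor
  · rintro ⟨q, hq, hD⟩
    obtain ⟨q'', hq1, hq2⟩ := exists_rat_btwn hq
    exact ⟨q'', hq1, Dset_claim2 (T := T) (f := f) hq2 hD⟩
  · rintro ⟨q, hq, hD⟩
    obtain ⟨q'', hq1, hq2⟩ := exists_rat_btwn hq
    exact ⟨q'', hq1, Dset_claim1 (T := T) (f := f) hq2 hD⟩

private lemma Dset_null [IsProbabilityMeasure μ] (hT : Ergodic T μ) (hfm : Measurable f)
    (hfi : Integrable f μ) {c : ℝ} (hc : ∫ ω, f ω ∂μ < c) : μ (Dset T f c) = 0 := by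
  set b := ((∫ ω, f ω ∂μ) + c) / 2 with hbdef
  have hb1 : ∫ ω, f ω ∂μ < b := by rw [hbdef]; linarith
  have hb2 : b < c := by rw [hbdef]; linarith
  obtain ⟨q, hq1, hq2⟩ := exists_rat_btwn hb2
  have hsub1 : Dset T f c ⊆ Dset T f q := Dset_mono (le_of_lt hq2)
  have hsub2 : Dset T f (q : ℝ) ⊆ Uset T f b := by
    intro ω hω
    simp only [Uset, Set.mem_iUnion]
    exact ⟨q, hq1, hω⟩
  suffices hU : μ (Uset T f b) = 0 by
    exact measure_mono_null (hsub1.trans hsub2) hU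
  rcases hT.toPreErgodic.ae_empty_or_univ (Uset_meas hT.toMeasurePreserving.measurable hfm b)
      (Uset_inv b) with h0 | h1
  · rwa [ae_eq_empty] at h0
  · exfalso
    have hV1 : μ {ω | ∃ n : ℕ, 1 ≤ n ∧
        (n : ℝ) * b < ∑ i ∈ Finset.range n, f (T^[i] ω)} = 1 := by
      have hsub : Uset T f b ⊆ {ω | ∃ n : ℕ, 1 ≤ n ∧
          (n : ℝ) * b < ∑ i ∈ Finset.range n, f (T^[i] ω)} := by
        intro ω hω
        simp only [Uset, Set.mem_iUnion] at hω
        obtain ⟨r, hr, hωD⟩ := hω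
        rw [Dset, Set.mem_setOf_eq, frequently_atTop] at hωD
        obtain ⟨n, hn1, hlt⟩ := hωD 1
        exact ⟨n, hn1, lt_of_le_of_lt
          (mul_le_mul_of_nonneg_left (le_of_lt hr) (Nat.cast_nonneg n)) hlt⟩
      have hUc : μ (Uset T f b) = 1 := by
        rw [measure_congr h1, measure_univ]
      exact le_antisymm prob_le_one (hUc ▸ measure_mono hsub)
    have := kw_key hT.toMeasurePreserving hfm hfi b hV1
    linarith

private lemma birkhoff_upper [IsProbabilityMeasure μ] (hT : Ergodic T μ) (hfm : Measurable f)
    (hfi : Integrable f μ) :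
    ∀ᵐ ω ∂μ, ∀ q : ℚ, ∫ ω, f ω ∂μ < q → ∀ᶠ n : ℕ in atTop,
      ∑ i ∈ Finset.range n, f (T^[i] ω) ≤ (n : ℝ) * q := by
  rw [ae_all_iff]
  intro q
  by_cases hq : ∫ ω, f ω ∂μ < q
  · have hnull := Dset_null hT hfm hfi hq
    filter_upwards [compl_mem_ae_iff.mpr hnull] with ω hω _
    have hnot : ¬ ∃ᶠ n : ℕ in atTop, (n : ℝ) * q < ∑ i ∈ Finset.range n, f (T^[i] ω) := hω
    rw [not_frequently] at hnot
    exact hnot.mono fun n hn => not_lt.1 hn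
  · exact ae_of_all _ fun ω hq' => absurd hq' hq

theorem birkhoff_ergodic [IsProbabilityMeasure μ] (hT : Ergodic T μ) (hfm : Measurable f)
    (hfi : Integrable f μ) :
    ∀ᵐ ω ∂μ, Tendsto (fun n : ℕ => (n : ℝ)⁻¹ * ∑ i ∈ Finset.range n, f (T^[i] ω))
      atTop (nhds (∫ ω, f ω ∂μ)) := by
  have h2 := birkhoff_upper hT hfm.neg hfi.neg
  filter_upwards [birkhoff_upper hT hfm hfi, h2] with ω hω1 hω2
  rw [Metric.tendsto_atTop]
  intro ε hε
  set I := ∫ ω, f ω ∂μ with hIdef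
  have hI2 : ∫ ω, -f ω ∂μ = -I := by rw [← integral_neg]
  obtain ⟨q, hq1, hq2⟩ := exists_rat_btwn (show I < I + ε / 2 by linarith)
  obtain ⟨r, hr1, hr2⟩ := exists_rat_btwn (show -I < -I + ε / 2 by linarith)
  have hev1 := hω1 q hq1
  have hev2 := hω2 r (by show ∫ ω, -f ω ∂μ < r; rw [hI2]; exact hr1)
  have hev3 : ∀ᶠ n : ℕ in atTop, 1 ≤ n := eventually_ge_atTop 1
  obtain ⟨N, hN⟩ := eventually_atTop.1 ((hev1.and hev2).and hev3)
  refine ⟨N, fun n hn => ?_⟩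
  obtain ⟨⟨h1, h2⟩, h3⟩ := hN n hn
  have hnpos : (0 : ℝ) < n := by exact_mod_cast h3
  have hsneg : ∑ i ∈ Finset.range n, (-f) (T^[i] ω)
      = -∑ i ∈ Finset.range n, f (T^[i] ω) := by
    simp [Finset.sum_neg_distrib]
  rw [hsneg] at h2
  have hlow : (n : ℝ) * (-r) ≤ ∑ i ∈ Finset.range n, f (T^[i] ω) := by nlinarith
  have havg_le : (n : ℝ)⁻¹ * ∑ i ∈ Finset.range n, f (T^[i] ω) ≤ q := by
    rw [inv_mul_le_iff₀ hnpos]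
    linarith
  have havg_ge : (-r : ℝ) ≤ (n : ℝ)⁻¹ * ∑ i ∈ Finset.range n, f (T^[i] ω) := by
    rw [le_inv_mul_iff₀ hnpos]
    linarith
  rw [Real.dist_eq, abs_sub_lt_iff]
  constructor
  · have : (q : ℝ) < I + ε / 2 := hq2
    linarith
  · have : (r : ℝ) < -I + ε / 2 := hr2
    linarith

end Inv

section Unif

private lemma unif_approx {F G : ℝ → ℝ} {cf c ε : ℝ} (hε : 0 < ε)
    (hFc : Continuous F) (hFm : Monotone F)
    (hF0 : Tendsto F atBot (nhds 0)) (hFcf : Tendsto F atTop (nhds cf))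
    (hGm : Monotone G)
    (hGF : ∀ x, G x ≤ F x) (hG0 : ∀ x, 0 ≤ G x) (hGc : ∀ x, G x ≤ c)
    (hGtail : ∀ x, c - G x ≤ cf - F x)
    (hGi : ∀ x y, x ≤ y → G y - G x ≤ F y - F x) :
    ∃ s : Finset ℝ, ∀ (A : ℝ → ℝ) (a : ℝ), Monotone A → (∀ x, 0 ≤ A x) →
      (∀ x, A x ≤ a) → ∀ x : ℝ, ∃ t1 ∈ s, ∃ t2 ∈ s,
        |A x - G x| ≤ |A t1 - G t1| + |A t2 - G t2| + |a - c| + ε := by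
  have hF0' : ∀ x, 0 ≤ F x := fun x => le_trans (hG0 x) (hGF x)
  obtain ⟨x₀', hx₀'⟩ : ∃ x, F x < ε := (hF0.eventually (gt_mem_nhds hε)).exists
  obtain ⟨xk, hxk⟩ : ∃ x, cf - ε < F x :=
    (hFcf.eventually (Ioi_mem_nhds (by linarith : cf - ε < cf))).exists
  set x₀ := min x₀' xk with hx₀def
  have hx₀xk : x₀ ≤ xk := min_le_right _ _
  have hFx₀ : F x₀ ≤ ε := le_of_lt (lt_of_le_of_lt (hFm (min_le_left _ _)) hx₀')
  have hFxk : cf - F xk ≤ ε := by linarith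
  -- uniform continuity on the compact interval
  obtain ⟨δ, hδ0, hδ⟩ : ∃ δ > 0, ∀ u ∈ Set.Icc x₀ xk, ∀ v ∈ Set.Icc x₀ xk,
      dist u v < δ → dist (F u) (F v) < ε := by
    have huc := (isCompact_Icc (a := x₀) (b := xk)).uniformContinuousOn_of_continuous
      hFc.continuousOn
    rw [Metric.uniformContinuousOn_iff] at huc
    exact huc ε hε
  set m := ⌈(xk - x₀) / (δ / 2)⌉₊ with hmdef
  set s : Finset ℝ := (Finset.range (m + 2)).image (fun i : ℕ => min (x₀ + (i : ℝ) * (δ / 2)) xk)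
    with hsdef
  have hx₀s : x₀ ∈ s := by
    rw [hsdef]
    apply Finset.mem_image.mpr
    exact ⟨0, Finset.mem_range.mpr (by omega), by simp [min_eq_left hx₀xk]⟩
  have hxks : xk ∈ s := by
    rw [hsdef]
    apply Finset.mem_image.mpr
    refine ⟨m, Finset.mem_range.mpr (by omega), ?_⟩
    rw [min_eq_right]
    have := Nat.le_ceil ((xk - x₀) / (δ / 2))
    rw [div_le_iff₀ (by linarith)] at this
    rw [← hmdef] at this
    linarith
  refine ⟨s, ?_⟩
  intro A a hAm hA0 hAa x
  rcases lt_or_ge x x₀ with hx1 | hx1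
  · -- left tail
    refine ⟨x₀, hx₀s, x₀, hx₀s, ?_⟩
    have h1 : A x - G x ≤ |A x₀ - G x₀| + ε := by
      have := hAm (le_of_lt hx1)
      have := le_abs_self (A x₀ - G x₀)
      have := hGF x₀
      have := hG0 x
      have := hG0 x₀
      linarith
    have h2 : G x - A x ≤ |A x₀ - G x₀| + ε := by
      have := hGF x
      have := hFm (le_of_lt hx1)
      have := hA0 x
      have := abs_nonneg (A x₀ - G x₀)
      linarith
    have := abs_nonneg (a - c)
    rw [abs_sub_le_iff]
    constructor <;> linarith [abs_nonneg (A x₀ - G x₀)]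
  rcases le_or_gt x xk with hx2 | hx2
  · -- middle
    have hxnn : 0 ≤ x - x₀ := by linarith
    have hδ2 : (0:ℝ) < δ / 2 := by linarith
    set i := ⌊(x - x₀) / (δ / 2)⌋₊ with hidef
    have hfl : (i : ℝ) ≤ (x - x₀) / (δ / 2) := Nat.floor_le (by positivity)
    have hfl2 : (x - x₀) / (δ / 2) < (i : ℝ) + 1 := Nat.lt_floor_add_one _
    have hile : x₀ + (i : ℝ) * (δ / 2) ≤ x := by
      rw [← sub_nonneg]
      have := (le_div_iff₀ hδ2).mp hfl
      linarith
    have hile2 : x ≤ x₀ + ((i : ℝ) + 1) * (δ / 2) := by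
      have := (div_lt_iff₀ hδ2).mp hfl2
      linarith
    have him : i ≤ m := by
      have h1 : (x - x₀) / (δ / 2) ≤ (xk - x₀) / (δ / 2) :=
        by gcongr <;> linarith
      have h2 : ((i : ℝ)) ≤ (m : ℝ) := le_trans hfl (le_trans h1 (Nat.le_ceil _))
      exact_mod_cast h2
    set t1 := min (x₀ + (i : ℝ) * (δ / 2)) xk with ht1def
    set t2 := min (x₀ + ((i : ℝ) + 1) * (δ / 2)) xk with ht2def
    have ht1s : t1 ∈ s := by
      rw [hsdef]
      exact Finset.mem_image.mpr ⟨i, Finset.mem_range.mpr (by omega), rfl⟩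
    have ht2s : t2 ∈ s := by
      rw [hsdef]
      apply Finset.mem_image.mpr
      refine ⟨i + 1, Finset.mem_range.mpr (by omega), ?_⟩
      rw [ht2def]
      push_cast
      ring_nf
    have ht1x : t1 ≤ x := le_trans (min_le_left _ _) hile
    have ht2x : x ≤ t2 := le_min hile2 hx2
    have ht1I : t1 ∈ Set.Icc x₀ xk := by
      constructor
      · apply le_min _ hx₀xk
        nlinarith [Nat.cast_nonneg (α := ℝ) i]
      · exact min_le_right _ _
    have ht2I : t2 ∈ Set.Icc x₀ xk := by
      constructor
      · apply le_min _ hx₀xk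
        nlinarith [Nat.cast_nonneg (α := ℝ) i]
      · exact min_le_right _ _
    have ht12 : t1 ≤ t2 := le_trans ht1x ht2x
    have hdist : dist t1 t2 < δ := by
      rw [Real.dist_eq, abs_sub_lt_iff]
      constructor
      · linarith
      · rcases le_total (x₀ + (i : ℝ) * (δ / 2)) xk with hc | hc
        · have heq : t1 = x₀ + (i : ℝ) * (δ / 2) := min_eq_left hc
          have h2 : t2 ≤ x₀ + ((i : ℝ) + 1) * (δ / 2) := min_le_left _ _
          rw [heq]
          nlinarith
        · have h1 : t1 = xk := min_eq_right hc
          have h2 : t2 = xk := min_eq_right (by nlinarith)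
          rw [h1, h2]; linarith
    have hFt : F t2 - F t1 ≤ ε := by
      have := hδ t2 ht2I t1 ht1I (by rwa [dist_comm])
      rw [Real.dist_eq, abs_sub_lt_iff] at this
      linarith [this.1]
    refine ⟨t1, ht1s, t2, ht2s, ?_⟩
    rw [abs_sub_le_iff]
    have hGi12 := hGi t1 t2 ht12
    have e1 : A x - G x ≤ |A t2 - G t2| + (G t2 - G t1) := by
      have := hAm ht2x
      have := hGm ht1x
      have := le_abs_self (A t2 - G t2)
      linarith
    have e2 : G x - A x ≤ (G t2 - G t1) + |A t1 - G t1| := by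
      have := hAm ht1x
      have := hGm ht2x
      have h := le_abs_self (G t1 - A t1)
      rw [abs_sub_comm] at h
      linarith
    have := abs_nonneg (a - c)
    have := abs_nonneg (A t1 - G t1)
    have := abs_nonneg (A t2 - G t2)
    constructor <;> linarith
  · -- right tail
    refine ⟨xk, hxks, xk, hxks, ?_⟩
    have hxxk : xk ≤ x := le_of_lt hx2
    have h1 : A x - G x ≤ |a - c| + ε := by
      have := hAa x
      have := hGtail x
      have := hFm hxxk
      have := le_abs_self (a - c)
      linarith
    have h2 : G x - A x ≤ |A xk - G xk| + ε := by
      have := hAm hxxk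
      have := hGc x
      have := hGtail xk
      have h := le_abs_self (G xk - A xk)
      rw [abs_sub_comm] at h
      linarith
    rw [abs_sub_le_iff]
    constructor <;>
      linarith [abs_nonneg (A xk - G xk), abs_nonneg (a - c)]

end Unif

section Half
variable {Ω : Type*} {mΩ : MeasurableSpace Ω}

private lemma ev_abs_le {u : ℕ → ℝ} {l ε : ℝ} (h : Tendsto u atTop (nhds l)) (hε : 0 < ε) :
    ∀ᶠ n : ℕ in atTop, |u n - l| ≤ ε := by
  have := Metric.tendsto_atTop.1 h ε hε
  obtain ⟨N, hN⟩ := this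
  rw [eventually_atTop]
  exact ⟨N, fun n hn => le_of_lt (by rw [← Real.dist_eq]; exact hN n hn)⟩

private lemma half_unif (μ : Measure Ω) [IsProbabilityMeasure μ] (T : Ω → Ω)
    (hT : Ergodic T μ) (g X ψ : Ω → ℝ)
    (hgm : Measurable g) (hXm : Measurable X) (hψm : Measurable ψ) (hψi : Integrable ψ μ)
    (hg0 : ∀ ω, 0 ≤ g ω) (hψ0 : ∀ ω, 0 ≤ ψ ω) (hgψ : ∀ ω, g ω ≤ ψ ω)
    (hcont : Continuous fun x : ℝ => ∫ ω, ψ ω * (if X ω ≤ x then 1 else 0) ∂μ)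
    {ε : ℝ} (hε : 0 < ε) :
    ∀ᵐ ω ∂μ, ∀ᶠ n : ℕ in atTop, ∀ x : ℝ,
      |(n : ℝ)⁻¹ * ∑ i ∈ Finset.range n, g (T^[i] ω) * (if X (T^[i] ω) ≤ x then 1 else 0)
        - ∫ ω', g ω' * (if X ω' ≤ x then 1 else 0) ∂μ| ≤ 4 * ε := by
  classical
  have hind_meas : ∀ x : ℝ, Measurable (fun ω => if X ω ≤ x then (1 : ℝ) else 0) :=
    fun x => Measurable.ite (measurableSet_le hXm measurable_const)
      measurable_const measurable_const
  have hind01 : ∀ (x : ℝ) (ω : Ω), 0 ≤ (if X ω ≤ x then (1 : ℝ) else 0)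
      ∧ (if X ω ≤ x then (1 : ℝ) else 0) ≤ 1 := by
    intro x ω; split_ifs <;> norm_num
  have hind_mono : ∀ (x y : ℝ), x ≤ y → ∀ ω,
      (if X ω ≤ x then (1 : ℝ) else 0) ≤ (if X ω ≤ y then (1 : ℝ) else 0) := by
    intro x y hxy ω
    split_ifs with h1 h2
    · exact le_refl _
    · exact absurd (le_trans h1 hxy) h2
    · norm_num
    · exact le_refl _
  -- integrability of the cut-off integrands
  have hgint : ∀ x : ℝ, Integrable (fun ω => g ω * (if X ω ≤ x then 1 else 0)) μ := by
    intro x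
    apply hψi.mono ((hgm.mul (hind_meas x)).aestronglyMeasurable)
    filter_upwards with ω
    dsimp only [Pi.mul_apply]
    rw [Real.norm_eq_abs, Real.norm_eq_abs, abs_of_nonneg (hψ0 ω),
      abs_of_nonneg (mul_nonneg (hg0 ω) (hind01 x ω).1)]
    calc g ω * (if X ω ≤ x then (1:ℝ) else 0) ≤ g ω * 1 :=
          mul_le_mul_of_nonneg_left (hind01 x ω).2 (hg0 ω)
      _ = g ω := mul_one _
      _ ≤ ψ ω := hgψ ω
  have hψint : ∀ x : ℝ, Integrable (fun ω => ψ ω * (if X ω ≤ x then 1 else 0)) μ := by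
    intro x
    apply hψi.mono ((hψm.mul (hind_meas x)).aestronglyMeasurable)
    filter_upwards with ω
    dsimp only [Pi.mul_apply]
    rw [Real.norm_eq_abs, Real.norm_eq_abs, abs_of_nonneg (hψ0 ω),
      abs_of_nonneg (mul_nonneg (hψ0 ω) (hind01 x ω).1)]
    calc ψ ω * (if X ω ≤ x then (1:ℝ) else 0) ≤ ψ ω * 1 :=
          mul_le_mul_of_nonneg_left (hind01 x ω).2 (hψ0 ω)
      _ = ψ ω := mul_one _
  have hgi : Integrable g μ := by
    apply hψi.mono hgm.aestronglyMeasurable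
    filter_upwards with ω
    rw [Real.norm_eq_abs, Real.norm_eq_abs, abs_of_nonneg (hψ0 ω), abs_of_nonneg (hg0 ω)]
    exact hgψ ω
  set F : ℝ → ℝ := fun x => ∫ ω, ψ ω * (if X ω ≤ x then 1 else 0) ∂μ with hFdef
  set G : ℝ → ℝ := fun x => ∫ ω, g ω * (if X ω ≤ x then 1 else 0) ∂μ with hGdef
  set c := ∫ ω, g ω ∂μ with hcdef
  set cf := ∫ ω, ψ ω ∂μ with hcfdef
  have hFm : Monotone F := by
    intro x y hxy
    apply integral_mono (hψint x) (hψint y)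
    intro ω
    exact mul_le_mul_of_nonneg_left (hind_mono x y hxy ω) (hψ0 ω)
  have hGm : Monotone G := by
    intro x y hxy
    apply integral_mono (hgint x) (hgint y)
    intro ω
    exact mul_le_mul_of_nonneg_left (hind_mono x y hxy ω) (hg0 ω)
  have hF0 : Tendsto F atBot (nhds 0) := by
    have h0 : (0 : ℝ) = ∫ (_ : Ω), (0 : ℝ) ∂μ := by rw [integral_zero]
    rw [h0]
    apply tendsto_integral_filter_of_dominated_convergence ψ
    · exact Eventually.of_forall fun x => (hψm.mul (hind_meas x)).aestronglyMeasurable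
    · apply Eventually.of_forall
      intro x
      filter_upwards with ω
      rw [Real.norm_eq_abs, abs_of_nonneg (mul_nonneg (hψ0 ω) (hind01 x ω).1)]
      calc ψ ω * (if X ω ≤ x then (1:ℝ) else 0) ≤ ψ ω * 1 :=
            mul_le_mul_of_nonneg_left (hind01 x ω).2 (hψ0 ω)
        _ = ψ ω := mul_one _
    · exact hψi
    · filter_upwards with ω
      apply Tendsto.congr' _ tendsto_const_nhds
      filter_upwards [eventually_lt_atBot (X ω)] with x hx
      rw [if_neg (not_le.mpr hx), mul_zero]
  have hFcf : Tendsto F atTop (nhds cf) := by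
    rw [hcfdef]
    apply tendsto_integral_filter_of_dominated_convergence ψ
    · exact Eventually.of_forall fun x => (hψm.mul (hind_meas x)).aestronglyMeasurable
    · apply Eventually.of_forall
      intro x
      filter_upwards with ω
      rw [Real.norm_eq_abs, abs_of_nonneg (mul_nonneg (hψ0 ω) (hind01 x ω).1)]
      calc ψ ω * (if X ω ≤ x then (1:ℝ) else 0) ≤ ψ ω * 1 :=
            mul_le_mul_of_nonneg_left (hind01 x ω).2 (hψ0 ω)
        _ = ψ ω := mul_one _
    · exact hψi
    · filter_upwards with ω
      apply Tendsto.congr' _ tendsto_const_nhds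
      filter_upwards [eventually_ge_atTop (X ω)] with x hx
      rw [if_pos hx, mul_one]
  have hGF : ∀ x, G x ≤ F x := by
    intro x
    apply integral_mono (hgint x) (hψint x)
    intro ω
    exact mul_le_mul_of_nonneg_right (hgψ ω) (hind01 x ω).1
  have hG0 : ∀ x, 0 ≤ G x := fun x =>
    integral_nonneg fun ω => mul_nonneg (hg0 ω) (hind01 x ω).1
  have hGc : ∀ x, G x ≤ c := by
    intro x
    apply integral_mono (hgint x) hgi
    intro ω
    calc g ω * (if X ω ≤ x then (1:ℝ) else 0) ≤ g ω * 1 :=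
          mul_le_mul_of_nonneg_left (hind01 x ω).2 (hg0 ω)
      _ = g ω := mul_one _
  have hGtail : ∀ x, c - G x ≤ cf - F x := by
    intro x
    rw [hcdef, hGdef, hcfdef, hFdef, ← integral_sub hgi (hgint x),
      ← integral_sub hψi (hψint x)]
    apply integral_mono (hgi.sub (hgint x)) (hψi.sub (hψint x))
    intro ω
    have h1 := (hind01 x ω).1
    have h2 := (hind01 x ω).2
    have h3 := hgψ ω
    have h4 := hg0 ω
    simp only [Pi.sub_apply]
    nlinarith
  have hGi : ∀ x y, x ≤ y → G y - G x ≤ F y - F x := by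
    intro x y hxy
    rw [hGdef, hFdef, ← integral_sub (hgint y) (hgint x), ← integral_sub (hψint y) (hψint x)]
    apply integral_mono ((hgint y).sub (hgint x)) ((hψint y).sub (hψint x))
    intro ω
    have h5 := hind_mono x y hxy ω
    have h3 := hgψ ω
    have h4 := hg0 ω
    simp only [Pi.sub_apply]
    nlinarith
  obtain ⟨s, hs⟩ := unif_approx hε hcont hFm hF0 hFcf hGm hGF hG0 hGc hGtail hGi
  have hbirk1 : ∀ᵐ ω ∂μ, ∀ t ∈ (s : Set ℝ), Tendsto
      (fun n : ℕ => (n : ℝ)⁻¹ * ∑ i ∈ Finset.range n,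
        g (T^[i] ω) * (if X (T^[i] ω) ≤ t then 1 else 0)) atTop (nhds (G t)) := by
    rw [ae_ball_iff s.countable_toSet]
    intro t _
    exact birkhoff_ergodic hT (hgm.mul (hind_meas t)) (hgint t)
  have hbirk2 : ∀ᵐ ω ∂μ, Tendsto
      (fun n : ℕ => (n : ℝ)⁻¹ * ∑ i ∈ Finset.range n, g (T^[i] ω)) atTop (nhds c) :=
    birkhoff_ergodic hT hgm hgi
  filter_upwards [hbirk1, hbirk2] with ω hω1 hω2
  have hev1 : ∀ᶠ n : ℕ in atTop, ∀ t ∈ s,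
      |(n : ℝ)⁻¹ * ∑ i ∈ Finset.range n,
        g (T^[i] ω) * (if X (T^[i] ω) ≤ t then 1 else 0) - G t| ≤ ε := by
    rw [eventually_all_finset]
    intro t ht
    exact ev_abs_le (hω1 t ht) hε
  have hev2 : ∀ᶠ n : ℕ in atTop,
      |(n : ℝ)⁻¹ * ∑ i ∈ Finset.range n, g (T^[i] ω) - c| ≤ ε := ev_abs_le hω2 hε
  filter_upwards [hev1, hev2] with n hn1 hn2
  intro x
  set A : ℝ → ℝ := fun x => (n : ℝ)⁻¹ * ∑ i ∈ Finset.range n,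
    g (T^[i] ω) * (if X (T^[i] ω) ≤ x then 1 else 0) with hAdef
  set a := (n : ℝ)⁻¹ * ∑ i ∈ Finset.range n, g (T^[i] ω) with hadef
  have hninv : (0:ℝ) ≤ (n : ℝ)⁻¹ := by positivity
  have hAm : Monotone A := by
    intro x y hxy
    apply mul_le_mul_of_nonneg_left _ hninv
    apply Finset.sum_le_sum
    intro i _
    exact mul_le_mul_of_nonneg_left (hind_mono x y hxy _) (hg0 _)
  have hA0 : ∀ x, 0 ≤ A x := by
    intro x
    apply mul_nonneg hninv
    apply Finset.sum_nonneg
    intro i _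
    exact mul_nonneg (hg0 _) (hind01 x _).1
  have hAa : ∀ x, A x ≤ a := by
    intro x
    apply mul_le_mul_of_nonneg_left _ hninv
    apply Finset.sum_le_sum
    intro i _
    calc g (T^[i] ω) * (if X (T^[i] ω) ≤ x then (1:ℝ) else 0) ≤ g (T^[i] ω) * 1 :=
          mul_le_mul_of_nonneg_left (hind01 x _).2 (hg0 _)
      _ = g (T^[i] ω) := mul_one _
  obtain ⟨t1, ht1, t2, ht2, hbound⟩ := hs A a hAm hA0 hAa x
  have e1 := hn1 t1 ht1
  have e2 := hn1 t2 ht2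
  calc |A x - G x| ≤ |A t1 - G t1| + |A t2 - G t2| + |a - c| + ε := hbound
    _ ≤ ε + ε + ε + ε := by
        apply add_le_add _ le_rfl
        exact add_le_add (add_le_add e1 e2) hn2
    _ = 4 * ε := by ring

end Half

/-- Marked Glivenko–Cantelli for stationary ergodic sequences: if `(χ_i, X_{i-1}) =
(χ ∘ T^i, X ∘ T^i)` for an ergodic measure-preserving `T`, `E|χ| < ∞`, and
`x ↦ E[|χ| 1{X ≤ x}]` is continuous, then
`sup_x |n⁻¹ Σ χ_i 1{X_{i-1} ≤ x} - E[χ 1{X ≤ x}]| → 0` almost surely. -/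
theorem marked_glivenko_cantelli_ergodic {Ω : Type*} {mΩ : MeasurableSpace Ω}
    (μ : Measure Ω) [IsProbabilityMeasure μ]
    (T : Ω → Ω) (hT : Ergodic T μ) (χ X : Ω → ℝ)
    (hχm : Measurable χ) (hXm : Measurable X) (hχint : Integrable χ μ)
    (hcont : Continuous fun x : ℝ => ∫ ω, |χ ω| * (if X ω ≤ x then 1 else 0) ∂μ) :
    ∀ᵐ ω ∂μ, Tendsto (fun n : ℕ =>
      ⨆ x : ℝ, |(n : ℝ)⁻¹ * ∑ i ∈ Finset.range n,
          χ (T^[i] ω) * (if X (T^[i] ω) ≤ x then 1 else 0)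
        - ∫ ω', χ ω' * (if X ω' ≤ x then 1 else 0) ∂μ|)
      atTop (nhds 0) := by
  classical
  set p : Ω → ℝ := fun ω => max (χ ω) 0 with hpdef
  set q : Ω → ℝ := fun ω => max (-χ ω) 0 with hqdef
  have hpm : Measurable p := hχm.max measurable_const
  have hqm : Measurable q := hχm.neg.max measurable_const
  have hp0 : ∀ ω, 0 ≤ p ω := fun ω => le_max_right _ _
  have hq0 : ∀ ω, 0 ≤ q ω := fun ω => le_max_right _ _
  have hpabs : ∀ ω, p ω ≤ |χ ω| := fun ω => max_le (le_abs_self _) (abs_nonneg _)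
  have hqabs : ∀ ω, q ω ≤ |χ ω| := fun ω => max_le (neg_le_abs _) (abs_nonneg _)
  have hpq : ∀ ω, p ω - q ω = χ ω := fun ω => max_zero_sub_max_neg_zero_eq_self _
  have habs_m : Measurable fun ω => |χ ω| := hχm.abs
  have habs_i : Integrable (fun ω => |χ ω|) μ := hχint.abs
  have habs0 : ∀ ω, (0:ℝ) ≤ |χ ω| := fun ω => abs_nonneg _
  have hind_meas : ∀ x : ℝ, Measurable (fun ω => if X ω ≤ x then (1 : ℝ) else 0) :=
    fun x => Measurable.ite (measurableSet_le hXm measurable_const)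
      measurable_const measurable_const
  have hind01 : ∀ (x : ℝ) (ω : Ω), 0 ≤ (if X ω ≤ x then (1 : ℝ) else 0)
      ∧ (if X ω ≤ x then (1 : ℝ) else 0) ≤ 1 := by
    intro x ω; split_ifs <;> norm_num
  have hcut_int : ∀ (g : Ω → ℝ), Measurable g → (∀ ω, 0 ≤ g ω) → (∀ ω, g ω ≤ |χ ω|) →
      ∀ x : ℝ, Integrable (fun ω => g ω * (if X ω ≤ x then 1 else 0)) μ := by
    intro g hgm hg0 hgabs x
    apply habs_i.mono ((hgm.mul (hind_meas x)).aestronglyMeasurable)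
    filter_upwards with ω
    dsimp only [Pi.mul_apply]
    rw [Real.norm_eq_abs, Real.norm_eq_abs, abs_abs,
      abs_of_nonneg (mul_nonneg (hg0 ω) (hind01 x ω).1)]
    calc g ω * (if X ω ≤ x then (1:ℝ) else 0) ≤ g ω * 1 :=
          mul_le_mul_of_nonneg_left (hind01 x ω).2 (hg0 ω)
      _ = g ω := mul_one _
      _ ≤ |χ ω| := hgabs ω
  have hmain : ∀ᵐ ω ∂μ, ∀ m : ℕ, ∀ᶠ n : ℕ in atTop, ∀ x : ℝ,
      |(n : ℝ)⁻¹ * ∑ i ∈ Finset.range n, χ (T^[i] ω) * (if X (T^[i] ω) ≤ x then 1 else 0)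
        - ∫ ω', χ ω' * (if X ω' ≤ x then 1 else 0) ∂μ| ≤ 8 / ((m : ℝ) + 1) := by
    rw [ae_all_iff]
    intro m
    have hεpos : (0:ℝ) < 1 / ((m : ℝ) + 1) := by positivity
    have h1 := half_unif μ T hT p X (fun ω => |χ ω|) hpm hXm habs_m habs_i hp0 habs0
      hpabs hcont hεpos
    have h2 := half_unif μ T hT q X (fun ω => |χ ω|) hqm hXm habs_m habs_i hq0 habs0
      hqabs hcont hεpos
    filter_upwards [h1, h2] with ω hω1 hω2
    filter_upwards [hω1, hω2] with n hn1 hn2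
    intro x
    have hsum : ∑ i ∈ Finset.range n, χ (T^[i] ω) * (if X (T^[i] ω) ≤ x then 1 else 0)
        = (∑ i ∈ Finset.range n, p (T^[i] ω) * (if X (T^[i] ω) ≤ x then 1 else 0))
          - ∑ i ∈ Finset.range n, q (T^[i] ω) * (if X (T^[i] ω) ≤ x then 1 else 0) := by
      rw [← Finset.sum_sub_distrib]
      apply Finset.sum_congr rfl
      intro i _
      rw [← sub_mul, hpq]
    have hint : ∫ ω', χ ω' * (if X ω' ≤ x then 1 else 0) ∂μ
        = (∫ ω', p ω' * (if X ω' ≤ x then 1 else 0) ∂μ)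
          - ∫ ω', q ω' * (if X ω' ≤ x then 1 else 0) ∂μ := by
      rw [← integral_sub (hcut_int p hpm hp0 hpabs x) (hcut_int q hqm hq0 hqabs x)]
      apply integral_congr_ae
      refine ae_of_all _ fun ω' => ?_
      dsimp only
      rw [← sub_mul, hpq]
    have hiden : (n : ℝ)⁻¹ * ∑ i ∈ Finset.range n,
          χ (T^[i] ω) * (if X (T^[i] ω) ≤ x then 1 else 0)
          - ∫ ω', χ ω' * (if X ω' ≤ x then 1 else 0) ∂μ
        = ((n : ℝ)⁻¹ * ∑ i ∈ Finset.range n,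
            p (T^[i] ω) * (if X (T^[i] ω) ≤ x then 1 else 0)
            - ∫ ω', p ω' * (if X ω' ≤ x then 1 else 0) ∂μ)
          - ((n : ℝ)⁻¹ * ∑ i ∈ Finset.range n,
            q (T^[i] ω) * (if X (T^[i] ω) ≤ x then 1 else 0)
            - ∫ ω', q ω' * (if X ω' ≤ x then 1 else 0) ∂μ) := by
      rw [hsum, hint]; ring
    rw [hiden]
    calc |_ - _| ≤ _ + _ := abs_sub _ _
      _ ≤ 4 * (1 / ((m:ℝ) + 1)) + 4 * (1 / ((m:ℝ) + 1)) := add_le_add (hn1 x) (hn2 x)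
      _ = 8 / ((m : ℝ) + 1) := by ring
  filter_upwards [hmain] with ω hω
  rw [tendsto_order]
  constructor
  · intro v hv
    apply Eventually.of_forall
    intro n
    exact lt_of_lt_of_le hv (Real.iSup_nonneg fun x => abs_nonneg _)
  · intro v hv
    obtain ⟨m, hm⟩ := exists_nat_gt (8 / v)
    have h8 : 8 / ((m : ℝ) + 1) < v := by
      rw [div_lt_iff₀ (by positivity)]
      rw [div_lt_iff₀ hv] at hm
      nlinarith [Nat.cast_nonneg (α := ℝ) m]
    filter_upwards [hω m] with n hn
    exact lt_of_le_of_lt (ciSup_le fun x => hn x) h8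
end
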